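/- Let μ > 0 be a real number with μ ≠ n²π² for every positive integer n. Then for every ω ∈ C₀ there exists a unique X ∈ C¹₀ satisfying X'(t) + μ ∫₀ᵗ X(s) ds = X'(0) + ω(t) for all t ∈ [0,1]. -/

import Mathlib

open MeasureTheory intervalIntegral

/-- `X ∈ C¹₀` (with derivative `X'`) solves the linear integral equation
`X'(t) + μ ∫₀ᵗ X(s) ds = X'(0) + ω(t)` on `[0,1]`. -/
def SolLin (μ : ℝ) (ω : ℝ → ℝ) (X X' : ℝ → ℝ) : Prop :=
  (∀ t ∈ Set.Icc (0:ℝ) 1, HasDerivWithinAt X (X' t) (Set.Icc 0 1) t) ∧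
  ContinuousOn X' (Set.Icc 0 1) ∧ X 0 = 0 ∧ X 1 = 0 ∧
  ∀ t ∈ Set.Icc (0:ℝ) 1,
    X' t + μ * ∫ s in (0:ℝ)..t, X s = X' 0 + ω t



lemma sin_sqrt_ne {μ : ℝ} (hμ : 0 < μ)
    (hne : ∀ n : ℕ, 0 < n → μ ≠ (n : ℝ) ^ 2 * Real.pi ^ 2) :
    Real.sin (Real.sqrt μ) ≠ 0 := by
  intro h
  obtain ⟨n, hn⟩ := Real.sin_eq_zero_iff.1 h
  have hk : 0 < Real.sqrt μ := Real.sqrt_pos.2 hμ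
  have hπ := Real.pi_pos
  have hn0 : 0 < n := by
    by_contra hle
    push_neg at hle
    have : (n : ℝ) ≤ 0 := by exact_mod_cast hle
    nlinarith
  refine hne n.toNat (by omega) ?_
  have hcast : ((n.toNat : ℕ) : ℝ) = (n : ℝ) := by
    exact_mod_cast Int.toNat_of_nonneg hn0.le
  have hμeq : μ = Real.sqrt μ ^ 2 := (Real.sq_sqrt hμ.le).symm
  rw [hcast, hμeq, ← hn]; ring


lemma hasDerivAt_coskt (k t : ℝ) :
    HasDerivAt (fun u => Real.cos (k*u)) (-(Real.sin (k*t)) * k) t := by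
  exact ((Real.hasDerivAt_cos (k*t)).comp t ((hasDerivAt_id t).const_mul k)).congr_deriv (by ring)

lemma hasDerivAt_sinkt (k t : ℝ) :
    HasDerivAt (fun u => Real.sin (k*u)) (Real.cos (k*t) * k) t := by
  exact ((Real.hasDerivAt_sin (k*t)).comp t ((hasDerivAt_id t).const_mul k)).congr_deriv (by ring)

lemma exist_aux (μ k : ℝ) (hμ : μ = k^2) (hk : k ≠ 0) (hsin : Real.sin k ≠ 0)
    (g : ℝ → ℝ) (hg : Continuous g) (hg0 : g 0 = 0) :
    ∃ X X' : ℝ → ℝ, (∀ t, HasDerivAt X (X' t) t) ∧ Continuous X' ∧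
      X 0 = 0 ∧ X 1 = 0 ∧
      ∀ t, X' t + μ * ∫ s in (0:ℝ)..t, X s = X' 0 + g t := by
  have hcosc : Continuous fun s : ℝ => Real.cos (k*s) :=
    Real.continuous_cos.comp (continuous_const.mul continuous_id)
  have hsinc : Continuous fun s : ℝ => Real.sin (k*s) :=
    Real.continuous_sin.comp (continuous_const.mul continuous_id)
  set P : ℝ := ∫ s in (0:ℝ)..1, Real.cos (k*s) * g s with hP
  set Q : ℝ := ∫ s in (0:ℝ)..1, Real.sin (k*s) * g s with hQ
  set c : ℝ := -(k * (Real.cos k * P + Real.sin k * Q)) / Real.sin k with hcdef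
  set f : ℝ → ℝ := fun s => c + g s with hf
  set A : ℝ → ℝ := fun t => ∫ s in (0:ℝ)..t, Real.cos (k*s) * f s with hA
  set B : ℝ → ℝ := fun t => ∫ s in (0:ℝ)..t, Real.sin (k*s) * f s with hB
  set X : ℝ → ℝ := fun t => Real.cos (k*t) * A t + Real.sin (k*t) * B t with hX
  set X' : ℝ → ℝ := fun t =>
    f t - k * (Real.sin (k*t) * A t - Real.cos (k*t) * B t) with hX'
  clear_value P Q c f A B X X'
  have hfc : Continuous f := by rw [hf]; exact continuous_const.add hg
  have hcosf : Continuous fun s => Real.cos (k*s) * f s := hcosc.mul hfc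
  have hsinf : Continuous fun s => Real.sin (k*s) * f s := hsinc.mul hfc
  have hdA : ∀ t, HasDerivAt A (Real.cos (k*t) * f t) t := by
    rw [hA]
    exact fun t => integral_hasDerivAt_right (hcosf.intervalIntegrable 0 t)
      hcosf.aestronglyMeasurable.stronglyMeasurableAtFilter hcosf.continuousAt
  have hdB : ∀ t, HasDerivAt B (Real.sin (k*t) * f t) t := by
    rw [hB]
    exact fun t => integral_hasDerivAt_right (hsinf.intervalIntegrable 0 t)
      hsinf.aestronglyMeasurable.stronglyMeasurableAtFilter hsinf.continuousAt
  have hAc : Continuous A := continuous_iff_continuousAt.2 fun t => (hdA t).continuousAt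
  have hBc : Continuous B := continuous_iff_continuousAt.2 fun t => (hdB t).continuousAt
  have hdX : ∀ t, HasDerivAt X (X' t) t := by
    intro t
    have h := ((hasDerivAt_coskt k t).mul (hdA t)).add ((hasDerivAt_sinkt k t).mul (hdB t))
    rw [hX, hX']
    refine h.congr_deriv ?_
    linear_combination (f t) * (Real.sin_sq_add_cos_sq (k*t))
  have hXc : Continuous X := continuous_iff_continuousAt.2 fun t => (hdX t).continuousAt
  have hX'c : Continuous X' := by
    rw [hX']
    exact hfc.sub (continuous_const.mul ((hsinc.mul hAc).sub (hcosc.mul hBc)))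
  have hA0 : A 0 = 0 := by rw [hA]; exact integral_same
  have hB0 : B 0 = 0 := by rw [hB]; exact integral_same
  have hX0 : X 0 = 0 := by simp [hX, hA0, hB0]
  have hIcos : (∫ s in (0:ℝ)..1, Real.cos (k*s)) = Real.sin k / k := by
    have hd : ∀ s ∈ Set.uIcc (0:ℝ) 1,
        HasDerivAt (fun u => Real.sin (k*u)/k) (Real.cos (k*s)) s := by
      intro s _
      have := (hasDerivAt_sinkt k s).div_const k
      simpa [mul_div_assoc, mul_div_cancel_right₀ _ hk] using this
    have h := integral_eq_sub_of_hasDerivAt hd (hcosc.intervalIntegrable 0 1)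
    simpa using h
  have hIsin : (∫ s in (0:ℝ)..1, Real.sin (k*s)) = (1 - Real.cos k) / k := by
    have hd : ∀ s ∈ Set.uIcc (0:ℝ) 1,
        HasDerivAt (fun u => -Real.cos (k*u)/k) (Real.sin (k*s)) s := by
      intro s _
      have := ((hasDerivAt_coskt k s).div_const k).neg
      have h2 : (fun u => -Real.cos (k*u)/k) = -fun x => Real.cos (k * x) / k := by
        ext u; rw [Pi.neg_apply]; ring
      rw [h2]
      refine this.congr_deriv ?_
      rw [mul_div_cancel_right₀ _ hk, neg_neg]
    have h := integral_eq_sub_of_hasDerivAt hd (hsinc.intervalIntegrable 0 1)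
    rw [h, mul_one, mul_zero, Real.cos_zero]; ring
  have hA1 : A 1 = c * (Real.sin k / k) + P := by
    have h1 : A 1 = (∫ s in (0:ℝ)..1, c * Real.cos (k*s))
        + ∫ s in (0:ℝ)..1, Real.cos (k*s) * g s := by
      rw [hA]
      rw [← integral_add (f := fun s => c * Real.cos (k*s)) (g := fun s => Real.cos (k*s) * g s)
        ((continuous_const.mul hcosc).intervalIntegrable 0 1)
        ((hcosc.mul hg).intervalIntegrable 0 1)]
      apply integral_congr
      intro s _
      simp [hf]; ring
    rw [h1, intervalIntegral.integral_const_mul, hIcos, ← hP]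
  have hB1 : B 1 = c * ((1 - Real.cos k) / k) + Q := by
    have h1 : B 1 = (∫ s in (0:ℝ)..1, c * Real.sin (k*s))
        + ∫ s in (0:ℝ)..1, Real.sin (k*s) * g s := by
      rw [hB]
      rw [← integral_add (f := fun s => c * Real.sin (k*s)) (g := fun s => Real.sin (k*s) * g s)
        ((continuous_const.mul hsinc).intervalIntegrable 0 1)
        ((hsinc.mul hg).intervalIntegrable 0 1)]
      apply integral_congr
      intro s _
      simp [hf]; ring
    rw [h1, intervalIntegral.integral_const_mul, hIsin, ← hQ]
  have hcsin : c * Real.sin k = -(k * (Real.cos k * P + Real.sin k * Q)) := by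
    rw [hcdef]; field_simp
  have hX1 : X 1 = 0 := by
    rw [hX]
    simp only [mul_one, hA1, hB1]
    field_simp
    linear_combination hcsin
  have hY : ∀ t, (∫ s in (0:ℝ)..t, X s)
      = (Real.sin (k*t) * A t - Real.cos (k*t) * B t) / k := by
    intro t
    have hder : ∀ s ∈ Set.uIcc (0:ℝ) t,
        HasDerivAt (fun u => (Real.sin (k*u) * A u - Real.cos (k*u) * B u) / k) (X s) s := by
      intro s _
      have h := (((hasDerivAt_sinkt k s).mul (hdA s)).sub
        ((hasDerivAt_coskt k s).mul (hdB s))).div_const k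
      rw [hX]
      refine h.congr_deriv ?_
      field_simp
      ring
    have h := integral_eq_sub_of_hasDerivAt hder (hXc.intervalIntegrable 0 t)
    simpa [hA0, hB0] using h
  have hf0 : f 0 = c := by rw [hf]; simp [hg0]
  refine ⟨X, X', hdX, hX'c, hX0, hX1, fun t => ?_⟩
  rw [hY]
  simp only [hX', hf0, mul_zero, Real.sin_zero, Real.cos_zero, hA0, hB0]
  rw [hμ, hf]
  field_simp
  ring

lemma uniq_aux (μ k : ℝ) (hμ : μ = k^2) (hk : k ≠ 0) (hsin : Real.sin k ≠ 0)
    (D D' : ℝ → ℝ)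
    (hD : ∀ t ∈ Set.Icc (0:ℝ) 1, HasDerivWithinAt D (D' t) (Set.Icc 0 1) t)
    (hD'c : ContinuousOn D' (Set.Icc 0 1))
    (hD0 : D 0 = 0) (hD1 : D 1 = 0)
    (heq : ∀ t ∈ Set.Icc (0:ℝ) 1, D' t + μ * ∫ s in (0:ℝ)..t, D s = D' 0) :
    ∀ t ∈ Set.Icc (0:ℝ) 1, D t = 0 := by
  have hDc : ContinuousOn D (Set.Icc 0 1) := fun t ht => (hD t ht).continuousWithinAt
  have hclamp : Continuous fun t : ℝ => max 0 (min t 1) :=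
    continuous_const.max (continuous_id.min continuous_const)
  have hmem : ∀ t : ℝ, max 0 (min t 1) ∈ Set.Icc (0:ℝ) 1 :=
    fun t => ⟨le_max_left _ _, max_le (by norm_num) (min_le_right _ _)⟩
  set E : ℝ → ℝ := fun t => D (max 0 (min t 1)) with hE
  have hEc : Continuous E := hDc.comp_continuous hclamp hmem
  have hEeq : ∀ t ∈ Set.Icc (0:ℝ) 1, E t = D t := by
    intro t ht
    simp only [hE]
    rw [inf_eq_left.mpr ht.2, sup_eq_right.mpr ht.1]
  have hIeq : ∀ t ∈ Set.Icc (0:ℝ) 1,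
      (∫ s in (0:ℝ)..t, D s) = ∫ s in (0:ℝ)..t, E s := by
    intro t ht
    apply integral_congr
    intro s hs
    rw [Set.uIcc_of_le ht.1] at hs
    exact (hEeq s ⟨hs.1, hs.2.trans ht.2⟩).symm
  have hdI : ∀ t, HasDerivAt (fun u => ∫ s in (0:ℝ)..u, E s) (E t) t := fun t =>
    integral_hasDerivAt_right (hEc.intervalIntegrable 0 t)
      hEc.aestronglyMeasurable.stronglyMeasurableAtFilter hEc.continuousAt
  -- D' has derivative -μ * D t within Icc
  have hdD' : ∀ t ∈ Set.Icc (0:ℝ) 1,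
      HasDerivWithinAt D' (-μ * D t) (Set.Icc 0 1) t := by
    intro t ht
    have hphi : HasDerivWithinAt (fun u => D' 0 - μ * ∫ s in (0:ℝ)..u, E s)
        (-μ * D t) (Set.Icc 0 1) t := by
      have := ((hdI t).const_mul μ).const_sub (D' 0)
      have h2 : -(μ * E t) = -μ * D t := by rw [hEeq t ht]; ring
      exact h2 ▸ this.hasDerivWithinAt
    apply hphi.congr
    · intro y hy
      have := heq y hy
      rw [hIeq y hy] at this
      linarith
    · have := heq t ht
      rw [hIeq t ht] at this
      linarith
  set F : ℝ → ℝ := fun t => k * D t * Real.cos (k*t) - D' t * Real.sin (k*t) with hF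
  set G : ℝ → ℝ := fun t => k * D t * Real.sin (k*t) + D' t * Real.cos (k*t) with hG
  have hdF : ∀ t ∈ Set.Icc (0:ℝ) 1, HasDerivWithinAt F 0 (Set.Icc 0 1) t := by
    intro t ht
    have h := (((hD t ht).const_mul k).mul
        ((hasDerivAt_coskt k t).hasDerivWithinAt)).sub
      ((hdD' t ht).mul ((hasDerivAt_sinkt k t).hasDerivWithinAt))
    refine h.congr_deriv ?_
    rw [hμ]; ring
  have hdG : ∀ t ∈ Set.Icc (0:ℝ) 1, HasDerivWithinAt G 0 (Set.Icc 0 1) t := by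
    intro t ht
    have h := (((hD t ht).const_mul k).mul
        ((hasDerivAt_sinkt k t).hasDerivWithinAt)).add
      ((hdD' t ht).mul ((hasDerivAt_coskt k t).hasDerivWithinAt))
    refine h.congr_deriv ?_
    rw [hμ]; ring
  have hud : UniqueDiffOn ℝ (Set.Icc (0:ℝ) 1) := uniqueDiffOn_Icc (by norm_num)
  have hFconst : ∀ t ∈ Set.Icc (0:ℝ) 1, F t = F 0 := by
    apply constant_of_derivWithin_zero
    · exact fun t ht => (hdF t ht).differentiableWithinAt
    · intro t ht
      exact (hdF t (Set.mem_Icc_of_Ico ht)).derivWithin (hud t (Set.mem_Icc_of_Ico ht))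
  have hGconst : ∀ t ∈ Set.Icc (0:ℝ) 1, G t = G 0 := by
    apply constant_of_derivWithin_zero
    · exact fun t ht => (hdG t ht).differentiableWithinAt
    · intro t ht
      exact (hdG t (Set.mem_Icc_of_Ico ht)).derivWithin (hud t (Set.mem_Icc_of_Ico ht))
  have hF0 : F 0 = 0 := by simp [hF, hD0]
  have hG0 : G 0 = D' 0 := by simp [hG, hD0]
  have hDform : ∀ t ∈ Set.Icc (0:ℝ) 1, k * D t = D' 0 * Real.sin (k*t) := by
    intro t ht
    have h1 := hFconst t ht
    have h2 := hGconst t ht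
    rw [hF0] at h1; rw [hG0] at h2
    simp only [hF, hG] at h1 h2
    linear_combination Real.cos (k*t) * h1 + Real.sin (k*t) * h2
      + (-(k * D t)) * (Real.sin_sq_add_cos_sq (k*t))
  have hd0 : D' 0 = 0 := by
    have h1 := hDform 1 ⟨by norm_num, le_refl 1⟩
    rw [hD1, mul_one] at h1
    have : D' 0 * Real.sin k = 0 := by linarith
    exact (mul_eq_zero.1 this).resolve_right hsin
  intro t ht
  have := hDform t ht
  rw [hd0, zero_mul] at this
  have h2 : k * D t = 0 := this
  exact (mul_eq_zero.1 h2).resolve_left hk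

/-- existence and uniqueness for the linear problem when
`μ ≠ n²π²` for every positive integer `n`. -/
theorem stmt5 (μ : ℝ) (hμ : 0 < μ)
    (hne : ∀ n : ℕ, 0 < n → μ ≠ (n : ℝ) ^ 2 * Real.pi ^ 2)
    (ω : ℝ → ℝ) (hω : ContinuousOn ω (Set.Icc 0 1)) (hω0 : ω 0 = 0) :
    (∃ X X' : ℝ → ℝ, SolLin μ ω X X') ∧
    (∀ X X' Z Z' : ℝ → ℝ, SolLin μ ω X X' → SolLin μ ω Z Z' →
      Set.EqOn X Z (Set.Icc 0 1)) := by
  set k : ℝ := Real.sqrt μ with hkdef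
  have hμk : μ = k ^ 2 := (Real.sq_sqrt hμ.le).symm
  have hk : k ≠ 0 := by
    rw [hkdef]
    exact ne_of_gt (Real.sqrt_pos.2 hμ)
  have hsin : Real.sin k ≠ 0 := sin_sqrt_ne hμ hne
  constructor
  · -- existence
    set g : ℝ → ℝ := fun t => ω (max 0 (min t 1)) with hgdef
    have hclamp : Continuous fun t : ℝ => max 0 (min t 1) :=
      continuous_const.max (continuous_id.min continuous_const)
    have hmem : ∀ t : ℝ, max 0 (min t 1) ∈ Set.Icc (0:ℝ) 1 :=
      fun t => ⟨le_max_left _ _, max_le (by norm_num) (min_le_right _ _)⟩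
    have hgc : Continuous g := hω.comp_continuous hclamp hmem
    have hgeq : ∀ t ∈ Set.Icc (0:ℝ) 1, g t = ω t := by
      intro t ht
      simp only [hgdef]
      rw [inf_eq_left.mpr ht.2, sup_eq_right.mpr ht.1]
    have hg0 : g 0 = 0 := by
      rw [hgeq 0 ⟨le_refl 0, by norm_num⟩, hω0]
    obtain ⟨X, X', hdX, hX'c, hX0, hX1, heq⟩ := exist_aux μ k hμk hk hsin g hgc hg0
    refine ⟨X, X', fun t _ => (hdX t).hasDerivWithinAt, hX'c.continuousOn, hX0, hX1, ?_⟩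
    intro t ht
    rw [← hgeq t ht]
    exact heq t
  · -- uniqueness
    rintro X X' Z Z' ⟨hdX, hX'c, hX0, hX1, heqX⟩ ⟨hdZ, hZ'c, hZ0, hZ1, heqZ⟩
    intro t ht
    have hXc : ContinuousOn X (Set.Icc 0 1) := fun s hs => (hdX s hs).continuousWithinAt
    have hZc : ContinuousOn Z (Set.Icc 0 1) := fun s hs => (hdZ s hs).continuousWithinAt
    have key := uniq_aux μ k hμk hk hsin (fun s => X s - Z s) (fun s => X' s - Z' s)
      (fun s hs => (hdX s hs).sub (hdZ s hs))
      (hX'c.sub hZ'c)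
      (by simp [hX0, hZ0]) (by simp [hX1, hZ1])
      (by
        intro s hs
        have hsub : Set.uIcc (0:ℝ) s ⊆ Set.Icc 0 1 := by
          rw [Set.uIcc_of_le hs.1]
          exact Set.Icc_subset_Icc le_rfl hs.2
        have hint : (∫ u in (0:ℝ)..s, (X u - Z u))
            = (∫ u in (0:ℝ)..s, X u) - ∫ u in (0:ℝ)..s, Z u :=
          intervalIntegral.integral_sub ((hXc.mono hsub).intervalIntegrable)
            ((hZc.mono hsub).intervalIntegrable)
        have h1 := heqX s hs
        have h2 := heqZ s hs
        rw [hint]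
        linarith)
    have := key t ht
    simpa [sub_eq_zero] using this
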